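/- arXiv:2005.01413 — 2 statements merged into one kernel-verified Lean document; each statement's English description precedes it below -/
import Mathlib

section
/- Let (Ω, μ) be a σ-finite measure space, c : Ω → ℝ₊ measurable, ρ > 0, and φ satisfying both |1 − φ(λ, t)| ≤ (t²/2)(λ² + ρ²) and |1 − φ(λ, t)| ≥ κ for λt ≥ 1 (κ > 0). Suppose F ∈ L²(Ω, μ) and (c² + ρ²)^r F ∈ L²(Ω, μ) for some r ∈ ℕ. Then for all ν ≥ ρ and k ∈ ℕ, ‖F·χ_{{c ≥ ν}}‖₂ ≤ κ^{−(k+r)} 2^{−r} ν^{−2r} ‖(1 − φ(c(·), 1/ν))^k (c² + ρ²)^r F‖₂. -/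
open MeasureTheory ENNReal

/-- Fourier-side version of the second Jackson-type theorem with extra smoothness r. -/
theorem stmt_10
    {Ω : Type*} [MeasurableSpace Ω] (μ : Measure Ω) [SigmaFinite μ]
    (c : Ω → ℝ) (hc : Measurable c) (hc0 : ∀ x, 0 ≤ c x)
    (ρ : ℝ) (hρ : 0 < ρ) (φ : ℝ → ℝ → ℝ) (κ : ℝ) (hκ : 0 < κ)
    (hφu : ∀ lam t : ℝ, 0 ≤ lam → 0 < t → |1 - φ lam t| ≤ t ^ 2 / 2 * (lam ^ 2 + ρ ^ 2))
    (hφl : ∀ lam t : ℝ, 0 ≤ lam → 0 < t → 1 ≤ lam * t → κ ≤ |1 - φ lam t|)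
    (r : ℕ) (F : Ω → ℂ) (hF : MemLp F 2 μ)
    (hFr : MemLp (fun x => (((c x ^ 2 + ρ ^ 2) ^ r : ℝ)) • F x) 2 μ)
    (ν : ℝ) (hν : ρ ≤ ν) (k : ℕ) :
    eLpNorm ({x | ν ≤ c x}.indicator F) 2 μ ≤
      ENNReal.ofReal ((1 / κ) ^ (k + r) * (1 / 2) ^ r * (1 / ν) ^ (2 * r)) *
        eLpNorm
          (fun x => (((1 - φ (c x) (1 / ν)) ^ k * (c x ^ 2 + ρ ^ 2) ^ r : ℝ)) • F x) 2 μ := by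
  have hν0 : 0 < ν := lt_of_lt_of_le hρ hν
  set C : ℝ := (1 / κ) ^ (k + r) * (1 / 2) ^ r * (1 / ν) ^ (2 * r) with hC
  have hC0 : 0 ≤ C := by positivity
  set g : Ω → ℂ :=
    fun x => (((1 - φ (c x) (1 / ν)) ^ k * (c x ^ 2 + ρ ^ 2) ^ r : ℝ)) • F x with hg
  have hpt : ∀ x, ‖({x | ν ≤ c x}.indicator F) x‖ ≤ ‖(C • g) x‖ := by
    intro x
    by_cases hx : x ∈ {x | ν ≤ c x}
    · rw [Set.indicator_of_mem hx]
      have hx' : ν ≤ c x := hx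
      have ht : (0:ℝ) < 1 / ν := by positivity
      have hcx0 : 0 ≤ c x := hc0 x
      have h1 : 1 ≤ c x * (1 / ν) := by
        rw [mul_one_div, le_div_iff₀ hν0]; linarith
      have hl := hφl (c x) (1 / ν) hcx0 ht h1
      have hu := hφu (c x) (1 / ν) hcx0 ht
      have hchain := hl.trans hu
      have hinv : (1 / ν) ^ 2 * ν ^ 2 = 1 := by field_simp
      have hΛ : 2 * ν ^ 2 * κ ≤ c x ^ 2 + ρ ^ 2 := by
        nlinarith [mul_le_mul_of_nonneg_right hchain (sq_nonneg ν), hinv,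
          sq_nonneg ν, sq_nonneg (c x), sq_nonneg ρ]
      have hS0 : (0:ℝ) < c x ^ 2 + ρ ^ 2 := by positivity
      -- lower bound on the scalar
      have hm : κ ^ (k + r) * 2 ^ r * ν ^ (2 * r) ≤
          |(1 - φ (c x) (1 / ν)) ^ k * (c x ^ 2 + ρ ^ 2) ^ r| := by
        rw [abs_mul, abs_pow, abs_pow, abs_of_pos hS0]
        have h2 : κ ^ k ≤ |1 - φ (c x) (1 / ν)| ^ k :=
          pow_le_pow_left₀ hκ.le hl k
        have h3 : (2 * ν ^ 2 * κ) ^ r ≤ (c x ^ 2 + ρ ^ 2) ^ r :=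
          pow_le_pow_left₀ (by positivity) hΛ r
        have h4 : (2 * ν ^ 2 * κ) ^ r = 2 ^ r * ν ^ (2 * r) * κ ^ r := by
          rw [mul_pow, mul_pow, pow_mul]
        calc κ ^ (k + r) * 2 ^ r * ν ^ (2 * r)
            = κ ^ k * (2 ^ r * ν ^ (2 * r) * κ ^ r) := by rw [pow_add]; ring
          _ ≤ |1 - φ (c x) (1 / ν)| ^ k * (2 ^ r * ν ^ (2 * r) * κ ^ r) := by
              apply mul_le_mul_of_nonneg_right h2; positivity
          _ ≤ |1 - φ (c x) (1 / ν)| ^ k * (c x ^ 2 + ρ ^ 2) ^ r := by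
              apply mul_le_mul_of_nonneg_left (h4 ▸ h3); positivity
      have hCmul : C * (κ ^ (k + r) * 2 ^ r * ν ^ (2 * r)) = 1 := by
        rw [hC, one_div_pow, one_div_pow, one_div_pow]; field_simp
      have h5 : 1 ≤ C * |(1 - φ (c x) (1 / ν)) ^ k * (c x ^ 2 + ρ ^ 2) ^ r| := by
        calc (1:ℝ) = C * (κ ^ (k + r) * 2 ^ r * ν ^ (2 * r)) := hCmul.symm
          _ ≤ C * |(1 - φ (c x) (1 / ν)) ^ k * (c x ^ 2 + ρ ^ 2) ^ r| :=
            mul_le_mul_of_nonneg_left hm hC0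
      have hgx : ‖g x‖ = |(1 - φ (c x) (1 / ν)) ^ k * (c x ^ 2 + ρ ^ 2) ^ r| * ‖F x‖ := by
        rw [hg, norm_smul, Real.norm_eq_abs]
      have hCgx : ‖(C • g) x‖ = C * ‖g x‖ := by
        rw [Pi.smul_apply, norm_smul, Real.norm_eq_abs, abs_of_nonneg hC0]
      rw [hCgx, hgx, ← mul_assoc]
      nlinarith [norm_nonneg (F x), h5]
    · rw [Set.indicator_of_notMem hx]
      simp only [norm_zero]
      positivity
  calc eLpNorm ({x | ν ≤ c x}.indicator F) 2 μ
      ≤ eLpNorm (C • g) 2 μ := eLpNorm_mono hpt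
    _ = (‖C‖₊ : ℝ≥0∞) * eLpNorm g 2 μ := eLpNorm_const_smul C g 2 μ
    _ = ENNReal.ofReal C * eLpNorm g 2 μ := by
        rw [← enorm_eq_nnnorm, ← ofReal_norm_eq_enorm, Real.norm_of_nonneg hC0]
end

section
/- Let α > −1/2 and let j_α(x) = Γ(α+1)(2/x)^α J_α(x) be the normalized Bessel function of the first kind with j_α(0) = 1. Then there exist positive constants c₁(α), c₂(α) such that c₁ min{1, (λt)²} ≤ 1 − j_α(λt) ≤ c₂ min{1, (λt)²} for all λ, t ≥ 0. -/
/-- The normalized Bessel function of the first kind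
j_α(x) = Γ(α+1)(2/x)^α J_α(x), given by its power series, with j_α(0) = 1. -/
noncomputable def besselJNorm (α : ℝ) (x : ℝ) : ℝ :=
  ∑' n : ℕ, ((-1 : ℝ) ^ n * Real.Gamma (α + 1) /
      ((n.factorial : ℝ) * Real.Gamma ((n : ℝ) + α + 1))) * (x / 2) ^ (2 * n)

open Real MeasureTheory Set Filter Topology

noncomputable def besselW (α : ℝ) (t : ℝ) : ℝ := (1 - t^2) ^ (α - 1/2)

lemma besselW_pos {α t : ℝ} (ht : t ∈ Ioo (-1:ℝ) 1) : 0 < besselW α t := by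
  have : (0:ℝ) < 1 - t^2 := by nlinarith [ht.1, ht.2]
  exact Real.rpow_pos_of_pos this _

lemma besselW_nonneg {α t : ℝ} (ht : t ∈ Ioo (-1:ℝ) 1) : 0 ≤ besselW α t :=
  (besselW_pos ht).le

lemma besselW_contOn {α : ℝ} {s : Set ℝ} (hs : ∀ t ∈ s, t^2 < 1) :
    ContinuousOn (besselW α) s := by
  apply ContinuousOn.rpow_const
  · exact (continuous_const.sub (continuous_pow 2)).continuousOn
  · intro t ht
    exact Or.inl (by have := hs t ht; intro h; nlinarith)

lemma besselW_aesm {α : ℝ} : AEStronglyMeasurable (besselW α) (volume.restrict (Ioo (-1:ℝ) 1)) :=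
  (besselW_contOn (fun t ht => by nlinarith [ht.1, ht.2])).aestronglyMeasurable measurableSet_Ioo

lemma besselW_integrableOn {α : ℝ} (hα : -1/2 < α) :
    IntegrableOn (besselW α) (Ioo (-1:ℝ) 1) := by
  have he : -1 < α - 1/2 := by linarith
  set e := α - 1/2 with he'
  have hB : ∀ x : ℝ, x ∈ Icc (1:ℝ) 2 → x ^ e ≤ max 1 (2 ^ e) := by
    intro x hx
    rcases le_or_gt 0 e with h | h
    · exact le_max_of_le_right (Real.rpow_le_rpow (by linarith [hx.1]) hx.2 h)
    · exact le_max_of_le_left (Real.rpow_le_one_of_one_le_of_nonpos hx.1 h.le)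
  set B := max (1:ℝ) (2 ^ e) with hBdef
  have hfact : ∀ t ∈ Icc (-1:ℝ) 1, besselW α t = (1-t)^e * (1+t)^e := by
    intro t ht
    rw [besselW, ← he']
    rw [show 1 - t^2 = (1-t)*(1+t) by ring]
    exact Real.mul_rpow (by linarith [ht.2]) (by linarith [ht.1])
  have h1 : IntegrableOn (besselW α) (Ioo (0:ℝ) 1) := by
    have hi : IntegrableOn (fun t : ℝ => B * (1-t)^e) (Ioo (0:ℝ) 1) := by
      have := (intervalIntegral.intervalIntegrable_rpow' he (a := 1) (b := 0)).comp_sub_left 1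
      norm_num at this
      rw [intervalIntegrable_iff, uIoc_of_le (by norm_num : (0:ℝ) ≤ 1)] at this
      exact IntegrableOn.mono_set (this.const_mul B) Ioo_subset_Ioc_self
    apply Integrable.mono' hi
      ((besselW_contOn (fun t ht => by nlinarith [ht.1, ht.2])).aestronglyMeasurable measurableSet_Ioo)
    filter_upwards [ae_restrict_mem measurableSet_Ioo] with t ht
    have ht' : t ∈ Icc (-1:ℝ) 1 := ⟨by linarith [ht.1], ht.2.le⟩
    rw [Real.norm_of_nonneg (besselW_nonneg ⟨by linarith [ht.1], ht.2⟩), hfact t ht']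
    have h2 : (1+t)^e ≤ B := hB _ ⟨by linarith [ht.1], by linarith [ht.2]⟩
    have h3 : (0:ℝ) ≤ (1-t)^e := Real.rpow_nonneg (by linarith [ht.2]) _
    calc (1-t)^e * (1+t)^e ≤ (1-t)^e * B := mul_le_mul_of_nonneg_left h2 h3
      _ = B * (1-t)^e := mul_comm _ _
  have h2 : IntegrableOn (besselW α) (Ioc (-1:ℝ) 0) := by
    have hi : IntegrableOn (fun t : ℝ => B * (t+1)^e) (Ioc (-1:ℝ) 0) := by
      have := (intervalIntegral.intervalIntegrable_rpow' he (a := 0) (b := 1)).comp_add_right 1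
      norm_num at this
      rw [intervalIntegrable_iff, uIoc_of_le (by norm_num : (-1:ℝ) ≤ 0)] at this
      exact this.const_mul B
    apply Integrable.mono' hi
      ((besselW_contOn (fun t ht => by nlinarith [ht.1, ht.2])).aestronglyMeasurable measurableSet_Ioc)
    filter_upwards [ae_restrict_mem measurableSet_Ioc] with t ht
    have ht' : t ∈ Icc (-1:ℝ) 1 := ⟨ht.1.le, by linarith [ht.2]⟩
    rw [Real.norm_of_nonneg (besselW_nonneg ⟨ht.1, by linarith [ht.2]⟩), hfact t ht']
    have h2 : (1-t)^e ≤ B := hB _ ⟨by linarith [ht.2], by linarith [ht.1]⟩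
    have h3 : (0:ℝ) ≤ (1+t)^e := Real.rpow_nonneg (by linarith [ht.1]) _
    calc (1-t)^e * (1+t)^e ≤ B * (1+t)^e := mul_le_mul_of_nonneg_right h2 h3
      _ = B * (t+1)^e := by rw [add_comm]
  have : IntegrableOn (besselW α) (Ioc (-1:ℝ) 0 ∪ Ioo (0:ℝ) 1) := h2.union h1
  apply this.mono_set
  intro t ht
  rcases le_or_gt t 0 with h | h
  · exact Or.inl ⟨ht.1, h⟩
  · exact Or.inr ⟨h, ht.2⟩

lemma besselW_mul_integrableOn {α : ℝ} (hα : -1/2 < α) {g : ℝ → ℝ} (hg : Continuous g) :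
    IntegrableOn (fun t => g t * besselW α t) (Ioo (-1:ℝ) 1) := by
  obtain ⟨C, hC⟩ := (isCompact_Icc (a := (-1:ℝ)) (b := 1)).exists_bound_of_continuousOn
    hg.continuousOn
  apply Integrable.mono' ((besselW_integrableOn hα).const_mul C)
  · exact (hg.continuousOn.mul (besselW_contOn (fun t ht => by nlinarith [ht.1, ht.2]))).aestronglyMeasurable
      measurableSet_Ioo
  · filter_upwards [ae_restrict_mem measurableSet_Ioo] with t ht
    rw [norm_mul, Real.norm_of_nonneg (besselW_nonneg ht)]
    exact mul_le_mul_of_nonneg_right (hC t ⟨ht.1.le, ht.2.le⟩) (besselW_nonneg ht)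

noncomputable def besselM (α : ℝ) (n : ℕ) : ℝ :=
  ∫ t in Ioo (-1:ℝ) 1, t^(2*n) * besselW α t

lemma besselM_pos {α : ℝ} (hα : -1/2 < α) (n : ℕ) : 0 < besselM α n := by
  rw [besselM, MeasureTheory.setIntegral_pos_iff_support_of_nonneg_ae]
  · apply lt_of_lt_of_le _ (measure_mono (show Ioo (0:ℝ) 1 ⊆ _ from ?_))
    · rw [Real.volume_Ioo]; norm_num
    · intro t ht
      have ht' : t ∈ Ioo (-1:ℝ) 1 := ⟨by linarith [ht.1], ht.2⟩
      refine ⟨?_, ht'⟩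
      have : 0 < t^(2*n) * besselW α t :=
        mul_pos (pow_pos ht.1 _) (besselW_pos ht')
      exact ne_of_gt this
  · filter_upwards [ae_restrict_mem measurableSet_Ioo] with t ht
    exact mul_nonneg ((even_two_mul n).pow_nonneg t) (besselW_nonneg ht)
  · exact besselW_mul_integrableOn hα (continuous_pow (2*n))

lemma besselM_rec {α : ℝ} (hα : -1/2 < α) (n : ℕ) :
    (2*(n:ℝ) + 2*α + 2) * besselM α (n+1) = (2*(n:ℝ)+1) * besselM α n := by
  set p : ℝ := α + 1/2 with hp
  have hp0 : 0 < p := by rw [hp]; linarith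
  have hp1 : p - 1 = α - 1/2 := by rw [hp]; ring
  set F : ℝ → ℝ := fun t => t^(2*n+1) * (1-t^2)^p with hF
  set G : ℝ → ℝ := fun t =>
    (2*(n:ℝ)+1) * t^(2*n) * (1-t^2)^p + (-2*p) * (t^(2*n+2) * besselW α t) with hG
  have hderiv : ∀ t ∈ Ioo (-1:ℝ) 1, HasDerivAt F (G t) t := by
    intro t ht
    have hbase : (0:ℝ) < 1 - t^2 := by nlinarith [ht.1, ht.2]
    have h1 : HasDerivAt (fun t : ℝ => t^(2*n+1)) ((2*n+1 : ℕ) * t^(2*n)) t := by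
      simpa using hasDerivAt_pow (2*n+1) t
    have hin : HasDerivAt (fun t : ℝ => 1 - t^2) (-(2*t)) t := by
      simpa using (hasDerivAt_pow 2 t).const_sub 1
    have hout : HasDerivAt (fun x : ℝ => x ^ p) (p * (1-t^2) ^ (p-1)) (1-t^2) :=
      Real.hasDerivAt_rpow_const (Or.inl (ne_of_gt hbase))
    have h2 : HasDerivAt (fun t : ℝ => (1-t^2)^p) (p * (1-t^2)^(p-1) * (-(2*t))) t :=
      (HasDerivAt.comp t hout hin :)
    have := h1.fun_mul h2
    refine this.congr_deriv ?_
    rw [hG, hp1]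
    unfold besselW
    push_cast
    ring
  have hcont : ContinuousOn F (Icc (-1:ℝ) 1) := by
    apply ContinuousOn.mul (continuous_pow _).continuousOn
    exact ContinuousOn.rpow_const (continuous_const.sub (continuous_pow 2)).continuousOn
      (fun t _ => Or.inr hp0.le)
  have hint1 : IntegrableOn (fun t => (2*(n:ℝ)+1) * t^(2*n) * (1-t^2)^p) (Ioc (-1:ℝ) 1) := by
    apply Continuous.integrableOn_Ioc
    apply Continuous.mul (by continuity)
    exact (continuous_const.sub (continuous_pow 2)).rpow_const (fun t => Or.inr hp0.le)
  have hint2 : IntegrableOn (fun t => (-2*p) * (t^(2*n+2) * besselW α t)) (Ioc (-1:ℝ) 1) := by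
    rw [integrableOn_Ioc_iff_integrableOn_Ioo]
    exact ((besselW_mul_integrableOn hα (continuous_pow (2*n+2))).const_mul _)
  have hintG : IntervalIntegrable G volume (-1:ℝ) 1 := by
    rw [intervalIntegrable_iff, uIoc_of_le (by norm_num : (-1:ℝ) ≤ 1)]
    exact hint1.add hint2
  have hFTC := intervalIntegral.integral_eq_sub_of_hasDerivAt_of_le
    (by norm_num : (-1:ℝ) ≤ 1) hcont hderiv hintG
  have hF1 : F 1 = 0 := by
    simp [hF, Real.zero_rpow (ne_of_gt hp0)]
  have hFm1 : F (-1) = 0 := by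
    simp [hF, Real.zero_rpow (ne_of_gt hp0)]
  rw [hF1, hFm1, sub_zero] at hFTC
  -- convert interval integral to Ioo set integral
  rw [intervalIntegral.integral_of_le (by norm_num : (-1:ℝ) ≤ 1),
    MeasureTheory.integral_Ioc_eq_integral_Ioo] at hFTC
  have i1 : IntegrableOn (fun t => t^(2*n) * (1-t^2)^p) (Ioo (-1:ℝ) 1) :=
    IntegrableOn.mono_set (Continuous.integrableOn_Ioc ((continuous_pow _).mul
      ((continuous_const.sub (continuous_pow 2)).rpow_const (fun t => Or.inr hp0.le))))
      Ioo_subset_Ioc_self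
  have i2 : IntegrableOn (fun t => t^(2*(n+1)) * besselW α t) (Ioo (-1:ℝ) 1) :=
    besselW_mul_integrableOn hα (continuous_pow (2*(n+1)))
  have i3 : IntegrableOn (fun t => t^(2*n) * besselW α t) (Ioo (-1:ℝ) 1) :=
    besselW_mul_integrableOn hα (continuous_pow (2*n))
  have e1 : ∫ t in Ioo (-1:ℝ) 1, G t =
      ∫ t in Ioo (-1:ℝ) 1, ((2*(n:ℝ)+1) * (t^(2*n) * (1-t^2)^p)
        + (-2*p) * (t^(2*(n+1)) * besselW α t)) :=
    setIntegral_congr_fun measurableSet_Ioo (fun t _ => by rw [hG]; ring)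
  have hsplit : ∫ t in Ioo (-1:ℝ) 1, G t =
      (2*(n:ℝ)+1) * (∫ t in Ioo (-1:ℝ) 1, t^(2*n) * (1-t^2)^p)
      + (-2*p) * besselM α (n+1) := by
    rw [e1, MeasureTheory.integral_add (i1.const_mul _) (i2.const_mul _),
      MeasureTheory.integral_const_mul, MeasureTheory.integral_const_mul, besselM]
  have hA : (∫ t in Ioo (-1:ℝ) 1, t^(2*n) * (1-t^2)^p)
      = besselM α n - besselM α (n+1) := by
    have hcong : ∀ t ∈ Ioo (-1:ℝ) 1,
        t^(2*n) * (1-t^2)^p = t^(2*n) * besselW α t - t^(2*(n+1)) * besselW α t := by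
      intro t ht
      have hbase : (0:ℝ) < 1 - t^2 := by nlinarith [ht.1, ht.2]
      have h5 : (1-t^2)^p = (1-t^2)^(α-1/2) * (1-t^2) := by
        rw [show p = (α-1/2)+1 by rw [hp]; ring]
        exact Real.rpow_add_one (ne_of_gt hbase) _
      rw [h5]
      unfold besselW
      ring
    rw [setIntegral_congr_fun measurableSet_Ioo hcong,
      MeasureTheory.integral_sub i3 i2, besselM, besselM]
  rw [hsplit, hA] at hFTC
  linear_combination -hFTC

lemma besselM_closed {α : ℝ} (hα : -1/2 < α) (n : ℕ) :
    besselM α n * (4^n * (n.factorial:ℝ) * Real.Gamma ((n:ℝ)+α+1))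
      = besselM α 0 * (((2*n).factorial : ℝ) * Real.Gamma (α+1)) := by
  induction n with
  | zero => norm_num
  | succ n ih =>
    have hrec := besselM_rec hα n
    have hne : ((n:ℝ)+α+1) ≠ 0 := by
      have : (0:ℝ) ≤ (n:ℝ) := n.cast_nonneg
      intro h; linarith
    have h2 : (2*(n+1)) = (2*n+1)+1 := by ring
    rw [h2, Nat.factorial_succ, Nat.factorial_succ, Nat.factorial_succ]
    push_cast
    rw [show ((n:ℝ)+1+α+1) = ((n:ℝ)+α+1)+1 from by ring, Real.Gamma_add_one hne]
    push_cast at ih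
    linear_combination (2*((n:ℝ)+1) * 4^n * (n.factorial:ℝ) * Real.Gamma ((n:ℝ)+α+1)) * hrec
      + (2*((n:ℝ)+1)*(2*(n:ℝ)+1) + 0) * ih

lemma besselM_zero {α : ℝ} : besselM α 0 = ∫ t in Ioo (-1:ℝ) 1, besselW α t := by
  rw [besselM]
  apply setIntegral_congr_fun measurableSet_Ioo
  intro t _
  norm_num

lemma besselKey {α : ℝ} (hα : -1/2 < α) (s : ℝ) :
    besselM α 0 * besselJNorm α s = ∫ t in Ioo (-1:ℝ) 1, Real.cos (s*t) * besselW α t := by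
  set μ := volume.restrict (Ioo (-1:ℝ) 1) with hμ
  set F : ℕ → ℝ → ℝ :=
    fun n t => ((-1:ℝ)^n * (s*t)^(2*n) / (((2*n).factorial : ℕ) : ℝ)) * besselW α t with hFdef
  have hF_int : ∀ n, Integrable (F n) μ := by
    intro n
    apply besselW_mul_integrableOn hα
    exact (continuous_const.mul ((continuous_const.mul continuous_id).pow _)).div_const _
  have hnorm_le : ∀ n, (∫ t, ‖F n t‖ ∂μ) ≤ (s^2)^n / (n.factorial : ℝ) * besselM α 0 := by
    intro n
    rw [besselM_zero, ← MeasureTheory.integral_const_mul]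
    apply MeasureTheory.integral_mono_ae (hF_int n).norm
      ((besselW_integrableOn hα).const_mul _)
    rw [hμ]
    filter_upwards [ae_restrict_mem measurableSet_Ioo] with t ht
    have h0 : ‖F n t‖ = ((s*t)^(2*n)/(((2*n).factorial : ℕ):ℝ)) * besselW α t := by
      simp only [hFdef]
      rw [Real.norm_eq_abs, abs_mul, abs_div, abs_mul, abs_pow, abs_neg, abs_one, one_pow,
        one_mul, abs_of_nonneg ((even_two_mul n).pow_nonneg (s*t)),
        abs_of_nonneg (besselW_nonneg ht), Nat.abs_cast]
    rw [h0]
    apply mul_le_mul_of_nonneg_right _ (besselW_nonneg ht)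
    have h1 : (s*t)^(2*n) ≤ (s^2)^n := by
      rw [pow_mul]
      apply pow_le_pow_left₀ (sq_nonneg _)
      have ht2 : t^2 ≤ 1 := by nlinarith [ht.1, ht.2]
      have he : (s*t)^2 = s^2 * t^2 := by ring
      nlinarith [sq_nonneg s]
    have h2 : ((n.factorial : ℕ):ℝ) ≤ (((2*n).factorial : ℕ):ℝ) := by
      exact_mod_cast Nat.factorial_le (by omega)
    have h3 : (0:ℝ) < (n.factorial : ℝ) := by exact_mod_cast n.factorial_pos
    have h4 : (0:ℝ) < (((2*n).factorial : ℕ):ℝ) := by exact_mod_cast (2*n).factorial_pos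
    exact div_le_div₀ (by positivity) h1 h3 h2
  have hsummable : Summable (fun n => ∫ t, ‖F n t‖ ∂μ) := by
    apply Summable.of_nonneg_of_le
      (fun n => MeasureTheory.integral_nonneg (fun t => norm_nonneg _)) hnorm_le
    exact (Real.summable_pow_div_factorial (s^2)).mul_right _
  have hsum := MeasureTheory.hasSum_integral_of_summable_integral_norm hF_int hsummable
  have hpt : ∀ t ∈ Ioo (-1:ℝ) 1, (∑' n, F n t) = Real.cos (s*t) * besselW α t := by
    intro t _
    simp only [hFdef]
    rw [tsum_mul_right, ← Real.cos_eq_tsum]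
  have hrhs : (∫ t, (∑' n, F n t) ∂μ) = ∫ t in Ioo (-1:ℝ) 1, Real.cos (s*t) * besselW α t := by
    rw [hμ]
    exact setIntegral_congr_fun measurableSet_Ioo hpt
  rw [hrhs] at hsum
  -- compute each integral
  have hterm : ∀ n, (∫ t, F n t ∂μ) = besselM α 0 *
      (((-1 : ℝ) ^ n * Real.Gamma (α + 1) /
        ((n.factorial : ℝ) * Real.Gamma ((n : ℝ) + α + 1))) * (s / 2) ^ (2 * n)) := by
    intro n
    have e1 : (∫ t, F n t ∂μ)
        = ((-1:ℝ)^n * s^(2*n) / (((2*n).factorial : ℕ):ℝ)) * besselM α n := by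
      rw [besselM, ← MeasureTheory.integral_const_mul, hμ]
      apply setIntegral_congr_fun measurableSet_Ioo
      intro t _
      simp only [hFdef]
      rw [mul_pow s t]
      ring
    rw [e1]
    have hc := besselM_closed hα n
    have hΓn : (0:ℝ) < Real.Gamma ((n:ℝ)+α+1) := by
      apply Real.Gamma_pos_of_pos
      have : (0:ℝ) ≤ (n:ℝ) := n.cast_nonneg
      linarith
    have hfn : (0:ℝ) < (n.factorial : ℝ) := by exact_mod_cast n.factorial_pos
    have hf2n : (0:ℝ) < (((2*n).factorial : ℕ):ℝ) := by exact_mod_cast (2*n).factorial_pos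
    have h4n : (0:ℝ) < (4:ℝ)^n := by positivity
    have hs2 : ((s/2:ℝ))^(2*n) = s^(2*n) / 4^n := by
      rw [div_pow]
      congr 1
      rw [pow_mul]
      norm_num
    rw [hs2]
    field_simp
    linear_combination (s^(2*n)) * hc
  have hsum2 : HasSum (fun n : ℕ => besselM α 0 *
      (((-1 : ℝ) ^ n * Real.Gamma (α + 1) /
        ((n.factorial : ℝ) * Real.Gamma ((n : ℝ) + α + 1))) * (s / 2) ^ (2 * n)))
      (∫ t in Ioo (-1:ℝ) 1, Real.cos (s*t) * besselW α t) := by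
    have : (fun n : ℕ => ∫ t, F n t ∂μ) = fun n : ℕ => besselM α 0 *
        (((-1 : ℝ) ^ n * Real.Gamma (α + 1) /
          ((n.factorial : ℝ) * Real.Gamma ((n : ℝ) + α + 1))) * (s / 2) ^ (2 * n)) :=
      funext hterm
    rwa [this] at hsum
  rw [besselJNorm, ← tsum_mul_left]
  exact hsum2.tsum_eq

lemma besselPhi_cont {α : ℝ} (hα : -1/2 < α) :
    Continuous (fun s => ∫ t in Ioo (-1:ℝ) 1, Real.cos (s*t) * besselW α t) := by
  apply MeasureTheory.continuous_of_dominated (bound := besselW α)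
  · intro s
    exact ((Real.continuous_cos.comp (continuous_const.mul continuous_id)).continuousOn.mul
      (besselW_contOn (fun t ht => by nlinarith [ht.1, ht.2]))).aestronglyMeasurable
      measurableSet_Ioo
  · intro s
    filter_upwards [ae_restrict_mem measurableSet_Ioo] with t ht
    rw [norm_mul, Real.norm_of_nonneg (besselW_nonneg ht)]
    calc ‖Real.cos (s*t)‖ * besselW α t ≤ 1 * besselW α t :=
          mul_le_mul_of_nonneg_right (by rw [Real.norm_eq_abs]; exact Real.abs_cos_le_one _)
            (besselW_nonneg ht)
      _ = besselW α t := one_mul _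
  · exact besselW_integrableOn hα
  · filter_upwards [] with t
    exact (Real.continuous_cos.comp (continuous_id.mul continuous_const)).mul continuous_const

lemma besselPhi_tendsto {α : ℝ} (hα : -1/2 < α) :
    Tendsto (fun s => ∫ t in Ioo (-1:ℝ) 1, Real.cos (s*t) * besselW α t) atTop (𝓝 0) := by
  set f : ℝ → ℂ := (Ioo (-1:ℝ) 1).indicator (fun t => (besselW α t : ℂ)) with hfdef
  have hf : Integrable f := by
    rw [hfdef, MeasureTheory.integrable_indicator_iff measurableSet_Ioo]
    exact (besselW_integrableOn hα).ofReal
  have hRL := Real.zero_at_infty_fourier f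
  have hcc : Tendsto (fun s : ℝ => s/(2*π)) atTop (cocompact ℝ) := by
    rw [cocompact_eq_atBot_atTop]
    exact (tendsto_id.atTop_div_const (by positivity)).mono_right le_sup_right
  have h2 : Tendsto (fun s => FourierTransform.fourier f (s/(2*π))) atTop (𝓝 0) := hRL.comp hcc
  have hint : ∀ s : ℝ, IntegrableOn
      (fun v => Complex.exp (↑(-(v*s)) * Complex.I) * (besselW α v : ℂ)) (Ioo (-1:ℝ) 1) := by
    intro s
    apply Integrable.mono' (besselW_integrableOn hα)
    · apply ContinuousOn.aestronglyMeasurable _ measurableSet_Ioo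
      apply ContinuousOn.mul
      · exact (Complex.continuous_exp.comp ((Complex.continuous_ofReal.comp
          (continuous_id.mul continuous_const).neg).mul continuous_const)).continuousOn
      · exact Complex.continuous_ofReal.comp_continuousOn
          (besselW_contOn (fun t ht => by nlinarith [ht.1, ht.2]))
    · filter_upwards [ae_restrict_mem measurableSet_Ioo] with t ht
      rw [norm_mul, Complex.norm_exp_ofReal_mul_I, one_mul, Complex.norm_real,
        Real.norm_of_nonneg (besselW_nonneg ht)]
  have key : ∀ s : ℝ, (FourierTransform.fourier f (s/(2*π))).re
      = ∫ t in Ioo (-1:ℝ) 1, Real.cos (s*t) * besselW α t := by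
    intro s
    rw [Real.fourier_real_eq_integral_exp_smul]
    have e1 : (fun v : ℝ => Complex.exp (↑(-2*π*v*(s/(2*π))) * Complex.I) • f v)
        = (Ioo (-1:ℝ) 1).indicator
          (fun v => Complex.exp (↑(-(v*s)) * Complex.I) * (besselW α v : ℂ)) := by
      funext v
      rw [hfdef]
      by_cases hv : v ∈ Ioo (-1:ℝ) 1
      · rw [indicator_of_mem hv, indicator_of_mem hv, smul_eq_mul]
        congr 3
        have hπ : (π:ℂ) ≠ 0 := by exact_mod_cast Real.pi_ne_zero
        push_cast
        field_simp
      · rw [indicator_of_notMem hv, indicator_of_notMem hv, smul_zero]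
    rw [e1, MeasureTheory.integral_indicator measurableSet_Ioo]
    have hcomm := ContinuousLinearMap.integral_comp_comm Complex.reCLM (hint s)
    simp only [Complex.reCLM_apply] at hcomm
    rw [← hcomm]
    apply setIntegral_congr_fun measurableSet_Ioo
    intro t _
    simp only [Complex.mul_re, Complex.ofReal_re, Complex.ofReal_im, mul_zero, sub_zero,
      Complex.exp_ofReal_mul_I_re]
    rw [Real.cos_neg, mul_comm t s]
  have : (fun s => ∫ t in Ioo (-1:ℝ) 1, Real.cos (s*t) * besselW α t)
      = fun s => (FourierTransform.fourier f (s/(2*π))).re := by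
    funext s; rw [key s]
  rw [this]
  have := (Complex.continuous_re.tendsto 0).comp h2
  exact this

lemma one_sub_cos_bounds (x : ℝ) : 1 - Real.cos x ≤ x^2/2 ∧ 1 - Real.cos x ≤ 2 := by
  constructor
  · have := Real.one_sub_sq_div_two_le_cos (x := x); linarith
  · have := Real.neg_one_le_cos x; linarith

lemma sq_div_four_le_one_sub_cos {x : ℝ} (hx : |x| ≤ 1) : x^2/4 ≤ 1 - Real.cos x := by
  have h : ∀ y : ℝ, 0 ≤ y → y ≤ 1 → y^2/4 ≤ 1 - Real.cos y := by
    intro y h0 h1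
    rcases eq_or_lt_of_le h0 with h|h
    · rw [← h]; norm_num
    · have hs := Real.sin_gt_sub_cube (half_pos h)
      have hu2 : (y/2)^2 ≤ 1/4 := by nlinarith
      have hu3 := mul_le_mul_of_nonneg_right hu2 (half_pos h).le
      have hL : (15/16 : ℝ) * (y/2) ≤ Real.sin (y/2) := by nlinarith [half_pos h]
      have hsq := Real.sin_sq_eq_half_sub (y/2)
      rw [show 2 * (y/2) = y by ring] at hsq
      have hLpos : (0:ℝ) ≤ (15/16 : ℝ) * (y/2) := by positivity
      have h2 := mul_le_mul hL hL hLpos (hLpos.trans hL)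
      nlinarith
  have h2 := h |x| (abs_nonneg x) hx
  rw [Real.cos_abs, sq_abs] at h2
  exact h2

lemma cos_lt_one_of_mem {x : ℝ} (h0 : 0 < x) (hπ : x < π) : Real.cos x < 1 := by
  have hsin : 0 < Real.sin (x/2) :=
    Real.sin_pos_of_pos_of_lt_pi (half_pos h0) (by linarith [Real.pi_pos])
  have hsq := Real.sin_sq_eq_half_sub (x/2)
  rw [show 2 * (x/2) = x by ring] at hsq
  nlinarith

set_option maxHeartbeats 1000000 in
/-- Two-sided estimate c₁ min{1, (λt)²} ≤ 1 − j_α(λt) ≤ c₂ min{1, (λt)²}. -/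
theorem stmt_11 (α : ℝ) (hα : -1 / 2 < α) :
    ∃ c₁ c₂ : ℝ, 0 < c₁ ∧ 0 < c₂ ∧ ∀ lam t : ℝ, 0 ≤ lam → 0 ≤ t →
      c₁ * min 1 ((lam * t) ^ 2) ≤ 1 - besselJNorm α (lam * t) ∧
      1 - besselJNorm α (lam * t) ≤ c₂ * min 1 ((lam * t) ^ 2) := by
  have hα' : -1/2 < α := by linarith
  set φ : ℝ → ℝ := fun s => ∫ t in Ioo (-1:ℝ) 1, Real.cos (s*t) * besselW α t with hφdef
  set m0 := besselM α 0 with hm0def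
  set m1 := besselM α 1 with hm1def
  have hm0 : 0 < m0 := besselM_pos hα' 0
  have hm1 : 0 < m1 := besselM_pos hα' 1
  have h1j : ∀ s : ℝ, 1 - besselJNorm α s = (m0 - φ s) / m0 := by
    intro s
    rw [eq_div_iff hm0.ne']
    have hk := besselKey hα' s
    rw [hφdef]
    linear_combination -hk
  -- integrability facts
  have hWint := besselW_integrableOn hα'
  have hcosint : ∀ s : ℝ, IntegrableOn (fun t => Real.cos (s*t) * besselW α t) (Ioo (-1:ℝ) 1) :=
    fun s => besselW_mul_integrableOn hα' (Real.continuous_cos.comp (continuous_const.mul continuous_id))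
  have hocint : ∀ s : ℝ, IntegrableOn (fun t => (1 - Real.cos (s*t)) * besselW α t) (Ioo (-1:ℝ) 1) :=
    fun s => besselW_mul_integrableOn hα'
      (continuous_const.sub (Real.continuous_cos.comp (continuous_const.mul continuous_id)))
  have hpsi : ∀ s : ℝ, m0 - φ s = ∫ t in Ioo (-1:ℝ) 1, (1 - Real.cos (s*t)) * besselW α t := by
    intro s
    rw [hm0def, besselM_zero, hφdef, ← MeasureTheory.integral_sub hWint (hcosint s)]
    apply setIntegral_congr_fun measurableSet_Ioo
    intro t _; ring
  -- upper bounds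
  have hub2 : ∀ s : ℝ, m0 - φ s ≤ 2 * m0 := by
    intro s
    rw [hpsi s, hm0def, besselM_zero, ← MeasureTheory.integral_const_mul]
    apply MeasureTheory.integral_mono_ae (hocint s) (hWint.const_mul 2)
    filter_upwards [ae_restrict_mem measurableSet_Ioo] with t ht
    exact mul_le_mul_of_nonneg_right (one_sub_cos_bounds (s*t)).2 (besselW_nonneg ht)
  have hubs : ∀ s : ℝ, m0 - φ s ≤ s^2/2 * m0 := by
    intro s
    rw [hpsi s, hm0def, besselM_zero, ← MeasureTheory.integral_const_mul]
    apply MeasureTheory.integral_mono_ae (hocint s) (hWint.const_mul _)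
    filter_upwards [ae_restrict_mem measurableSet_Ioo] with t ht
    apply mul_le_mul_of_nonneg_right _ (besselW_nonneg ht)
    calc 1 - Real.cos (s*t) ≤ (s*t)^2/2 := (one_sub_cos_bounds (s*t)).1
      _ ≤ s^2/2 := by
          have ht2 : t^2 ≤ 1 := by nlinarith [ht.1, ht.2]
          nlinarith [mul_nonneg (sq_nonneg s) (sub_nonneg.2 ht2)]
  -- lower bound small s
  have hlb : ∀ s : ℝ, 0 ≤ s → s ≤ 1 → s^2/4 * m1 ≤ m0 - φ s := by
    intro s hs0 hs1
    rw [hpsi s]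
    have hil : IntegrableOn (fun t => s^2/4 * t^2 * besselW α t) (Ioo (-1:ℝ) 1) :=
      besselW_mul_integrableOn hα' (by continuity)
    have h1 : ∫ t in Ioo (-1:ℝ) 1, s^2/4 * t^2 * besselW α t = s^2/4 * m1 := by
      rw [hm1def, besselM, ← MeasureTheory.integral_const_mul]
      apply setIntegral_congr_fun measurableSet_Ioo
      intro t _
      norm_num
      ring
    rw [← h1]
    apply MeasureTheory.integral_mono_ae hil (hocint s)
    filter_upwards [ae_restrict_mem measurableSet_Ioo] with t ht
    have habs : |s*t| ≤ 1 := by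
      rw [abs_mul, abs_of_nonneg hs0]
      have hta : |t| ≤ 1 := by rw [abs_le]; exact ⟨ht.1.le, ht.2.le⟩
      calc s * |t| ≤ 1 * 1 := by
            apply mul_le_mul hs1 hta (abs_nonneg t) (by norm_num)
        _ = 1 := by norm_num
    have := sq_div_four_le_one_sub_cos habs
    have h3 : s^2/4 * t^2 = (s*t)^2/4 := by ring
    rw [h3]
    exact mul_le_mul_of_nonneg_right this (besselW_nonneg ht)
  -- strict positivity for s > 0
  have hpos : ∀ s : ℝ, 0 < s → 0 < m0 - φ s := by
    intro s hs
    rw [hpsi s, MeasureTheory.setIntegral_pos_iff_support_of_nonneg_ae]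
    · set c := min 1 (π/s) with hcdef
      have hc : 0 < c := lt_min one_pos (div_pos Real.pi_pos hs)
      apply lt_of_lt_of_le _ (measure_mono (show Ioo (0:ℝ) c ⊆ _ from ?_))
      · rw [Real.volume_Ioo]
        simpa using hc
      · intro t ht
        have ht1 : t < 1 := lt_of_lt_of_le ht.2 (min_le_left _ _)
        have ht' : t ∈ Ioo (-1:ℝ) 1 := ⟨by linarith [ht.1], ht1⟩
        refine ⟨?_, ht'⟩
        have hst0 : 0 < s * t := mul_pos hs ht.1
        have hstπ : s * t < π := by
          have := lt_of_lt_of_le ht.2 (min_le_right _ _)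
          calc s * t < s * (π/s) := by exact mul_lt_mul_of_pos_left this hs
            _ = π := by field_simp
        have hcos := cos_lt_one_of_mem hst0 hstπ
        have : 0 < (1 - Real.cos (s*t)) * besselW α t :=
          mul_pos (by linarith) (besselW_pos ht')
        exact ne_of_gt this
    · filter_upwards [ae_restrict_mem measurableSet_Ioo] with t ht
      have := Real.cos_le_one (s*t)
      exact mul_nonneg (by linarith) (besselW_nonneg ht)
    · exact hocint s
  -- large s
  have hev : ∀ᶠ s in atTop, φ s < m0/2 :=
    Filter.Tendsto.eventually_lt_const (by positivity) (besselPhi_tendsto hα')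
  obtain ⟨M, hM⟩ := eventually_atTop.1 hev
  set M' := max M 1 with hM'def
  -- min on [1, M']
  have hψcont : Continuous (fun s => m0 - φ s) := continuous_const.sub (besselPhi_cont hα')
  obtain ⟨s₀, hs₀mem, hs₀min⟩ := isCompact_Icc.exists_isMinOn
    (nonempty_Icc.2 (le_max_right M 1)) hψcont.continuousOn
  have hε : 0 < m0 - φ s₀ := hpos s₀ (lt_of_lt_of_le one_pos hs₀mem.1)
  refine ⟨min (m1/(4*m0)) (min ((m0 - φ s₀)/m0) (1/2)), 2, ?_, by norm_num, ?_⟩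
  · apply lt_min (by positivity) (lt_min (by positivity) (by norm_num))
  intro lam t hlam ht
  set s := lam * t with hsdef
  have hs0 : 0 ≤ s := mul_nonneg hlam ht
  rw [h1j s]
  constructor
  · -- lower bound
    rcases le_or_gt s 1 with hsle | hsgt
    · have hmin : min 1 (s^2) = s^2 := min_eq_right (by nlinarith)
      rw [hmin]
      calc min (m1/(4*m0)) (min ((m0 - φ s₀)/m0) (1/2)) * s^2
          ≤ m1/(4*m0) * s^2 := mul_le_mul_of_nonneg_right (min_le_left _ _) (sq_nonneg s)
        _ ≤ (m0 - φ s) / m0 := by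
            rw [div_mul_eq_mul_div, div_le_div_iff₀ (by positivity : (0:ℝ) < 4*m0) hm0]
            nlinarith [mul_nonneg (sub_nonneg.2 (hlb s hs0 hsle)) hm0.le]
    · have hmin : min 1 (s^2) = 1 := min_eq_left (by nlinarith)
      rw [hmin, mul_one]
      rcases le_or_gt s M' with hsM | hsM
      · have h5 : (m0 - φ s₀) ≤ (m0 - φ s) := isMinOn_iff.1 hs₀min s ⟨hsgt.le, hsM⟩
        calc min (m1/(4*m0)) (min ((m0 - φ s₀)/m0) (1/2))
            ≤ (m0 - φ s₀)/m0 := (min_le_right _ _).trans (min_le_left _ _)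
          _ ≤ (m0 - φ s)/m0 := by
              rw [div_le_div_iff₀ hm0 hm0]
              nlinarith [mul_le_mul_of_nonneg_right h5 hm0.le]
      · have h6 : φ s < m0/2 := hM s ((le_max_left M 1).trans hsM.le)
        calc min (m1/(4*m0)) (min ((m0 - φ s₀)/m0) (1/2))
            ≤ 1/2 := (min_le_right _ _).trans (min_le_right _ _)
          _ ≤ (m0 - φ s)/m0 := by
              rw [le_div_iff₀ hm0]
              linarith
  · -- upper bound
    rcases le_or_gt (s^2) 1 with hsle | hsgt
    · rw [min_eq_right hsle, div_le_iff₀ hm0]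
      have h7 : s^2/2 * m0 ≤ 2 * s^2 * m0 := by
        nlinarith [mul_nonneg (sq_nonneg s) hm0.le]
      linarith [hubs s]
    · rw [min_eq_left hsgt.le, div_le_iff₀ hm0]
      have := hub2 s
      linarith
end
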